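/- Let I be a finite subset of ℕ with at least two elements. Then: (a) for every integer i such that I + i = {j + i : j ∈ I} ⊆ ℕ, one has z_{I+i} = z_I; (b) for every positive rational r such that rI = {r·j : j ∈ I} ⊆ ℕ, one has z_{rI} = z_I; (c) z_{I^s} = z_I, where I^s = {min I + max I − j : j ∈ I} is the symmetric (reflected) set of I. In particular, equivalent finite subsets I ∼ J satisfy z_I = z_J. -/

import Mathlib

/-- `Zset I` is the set of pairs `(q, a) ∈ ℤ²` with `gcd q a` squarefree, `q ≠ 0`, and
`q * i + a` a perfect square for all `i ∈ I`. -/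
def Zset (I : Finset ℕ) : Set (ℤ × ℤ) :=
  {p | Squarefree (Int.gcd p.1 p.2) ∧ p.1 ≠ 0 ∧ ∀ i ∈ I, IsSquare (p.1 * (i : ℤ) + p.2)}

/-- `z I` is the number of elements of `Zset I`. -/
noncomputable def z (I : Finset ℕ) : ℕ := (Zset I).ncard

/-! ### Auxiliary lemmas -/

lemma sq_sf_unique {a b e c : ℕ} (hne : b ^ 2 * a ≠ 0) (h : b ^ 2 * a = c ^ 2 * e)
    (ha : Squarefree a) (he : Squarefree e) : b = c ∧ a = e := by
  have hb : b ≠ 0 := by intro hb0; simp [hb0] at hne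
  have ha0 : a ≠ 0 := by intro h0; simp [h0] at hne
  have hne' : c ^ 2 * e ≠ 0 := h ▸ hne
  have hc : c ≠ 0 := by intro h0; simp [h0] at hne'
  have he0 : e ≠ 0 := by intro h0; simp [h0] at hne'
  have hbc : b = c := by
    apply Nat.factorization_inj (by simp [hb]) (by simp [hc])
    ext p
    have := congrArg (fun n => n.factorization p) h
    simp only [Nat.factorization_mul (pow_ne_zero 2 hb) ha0,
      Nat.factorization_mul (pow_ne_zero 2 hc) he0, Nat.factorization_pow,
      Finsupp.add_apply, Finsupp.smul_apply, smul_eq_mul] at this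
    have h1 := ha.natFactorization_le_one p
    have h2 := he.natFactorization_le_one p
    omega
  subst hbc
  exact ⟨rfl, Nat.eq_of_mul_eq_mul_left (by positivity) h⟩

lemma key_dvd {Q A t s k : ℕ} (hQ : Q ≠ 0) (ht : t ≠ 0) (hs : s ≠ 0) (hst : s ∣ t ^ 2)
    (h2 : ∀ p : ℕ, p.Prime → ¬ (p ^ 2 ∣ Q ∧ p ^ 2 ∣ A)) (h3 : k ^ 2 ∣ Q * t)
    (h4 : k ^ 2 ∣ A * s) : k ∣ t := by
  have hk : k ≠ 0 := by
    rintro rfl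
    rw [pow_two, Nat.zero_mul, Nat.zero_dvd, Nat.mul_eq_zero] at h3
    tauto
  rw [← Nat.factorization_le_iff_dvd hk ht, Finsupp.le_def]
  intro p
  by_cases hp : p.Prime
  · by_contra hlt
    push_neg at hlt
    set e := k.factorization p with he
    set τ := t.factorization p with hτ
    have he1 : 1 ≤ e := by omega
    have hpk : p ^ (2 * e) ∣ k ^ 2 := by
      rw [two_mul, pow_add]
      exact mul_dvd_mul (Nat.ordProj_dvd k p) (Nat.ordProj_dvd k p) |>.trans (by rw [pow_two])
    have hQ2 : p ^ 2 ∣ Q := by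
      have hd : p ^ (2 * e) ∣ Q * t := hpk.trans h3
      rw [Nat.Prime.pow_dvd_iff_le_factorization hp (Nat.mul_ne_zero hQ ht),
        Nat.factorization_mul hQ ht, Finsupp.add_apply] at hd
      rw [Nat.Prime.pow_dvd_iff_le_factorization hp hQ]
      omega
    have hA2 : p ^ 2 ∣ A := by
      rcases eq_or_ne A 0 with rfl | hA
      · exact Dvd.intro 0 rfl
      · have hd : p ^ (2 * e) ∣ A * s := hpk.trans h4
        rw [Nat.Prime.pow_dvd_iff_le_factorization hp (Nat.mul_ne_zero hA hs),
          Nat.factorization_mul hA hs, Finsupp.add_apply] at hd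
        have hsτ : s.factorization p ≤ 2 * τ := by
          have := (Nat.factorization_le_iff_dvd hs (pow_ne_zero 2 ht)).2 hst
          have := this p
          simpa [Nat.factorization_pow, two_mul] using this
        rw [Nat.Prime.pow_dvd_iff_le_factorization hp hA]
        omega
    exact h2 p hp ⟨hQ2, hA2⟩
  · simp [Nat.factorization_eq_zero_of_not_prime _ hp]

lemma exists_red (X Y : ℤ) (hX : X ≠ 0) : ∃ p : ℤ × ℤ, ∃ k : ℕ, 0 < k ∧
    X = (k : ℤ) ^ 2 * p.1 ∧ Y = (k : ℤ) ^ 2 * p.2 ∧ Squarefree (Int.gcd p.1 p.2) := by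
  have hn : 0 < Int.gcd X Y := Int.gcd_pos_of_ne_zero_left Y hX
  obtain ⟨a, k, ha, hk, hka, hsf⟩ := Nat.sq_mul_squarefree_of_pos hn
  have hdX : ((k : ℤ)) ^ 2 ∣ X := by
    have h1 : ((k ^ 2 : ℕ) : ℤ) ∣ (Int.gcd X Y : ℤ) := Int.natCast_dvd_natCast.2 ⟨a, hka.symm⟩
    exact_mod_cast h1.trans (Int.gcd_dvd_left _ _)
  have hdY : ((k : ℤ)) ^ 2 ∣ Y := by
    have h1 : ((k ^ 2 : ℕ) : ℤ) ∣ (Int.gcd X Y : ℤ) := Int.natCast_dvd_natCast.2 ⟨a, hka.symm⟩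
    exact_mod_cast h1.trans (Int.gcd_dvd_right _ _)
  obtain ⟨x, hx⟩ := hdX
  obtain ⟨y, hy⟩ := hdY
  refine ⟨(x, y), k, hk, hx, hy, ?_⟩
  have hg : Int.gcd X Y = k ^ 2 * Int.gcd x y := by
    rw [hx, hy, Int.gcd_mul_left]
    simp [Int.natAbs_pow]
  rw [hg] at hka
  have := Nat.eq_of_mul_eq_mul_left (by positivity : 0 < k ^ 2) hka
  show Squarefree (Int.gcd x y)
  rwa [← this]

/-- Reduction of a pair of integers by the largest square dividing their gcd. -/
noncomputable def red (X Y : ℤ) : ℤ × ℤ :=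
  if h : X ≠ 0 then (exists_red X Y h).choose else (X, Y)

lemma red_spec {X Y : ℤ} (hX : X ≠ 0) : ∃ k : ℕ, 0 < k ∧
    X = (k : ℤ) ^ 2 * (red X Y).1 ∧ Y = (k : ℤ) ^ 2 * (red X Y).2 ∧
    Squarefree (Int.gcd (red X Y).1 (red X Y).2) := by
  rw [red, dif_pos hX]
  exact (exists_red X Y hX).choose_spec

lemma red_eq {x y : ℤ} (hx : x ≠ 0) (hsf : Squarefree (Int.gcd x y)) {k : ℕ} (hk : 0 < k) :
    red ((k : ℤ) ^ 2 * x) ((k : ℤ) ^ 2 * y) = (x, y) := by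
  have hX : (k : ℤ) ^ 2 * x ≠ 0 := by positivity
  obtain ⟨l, hl, h1, h2, hsf'⟩ := red_spec (Y := (k : ℤ) ^ 2 * y) hX
  set u := (red ((k : ℤ) ^ 2 * x) ((k : ℤ) ^ 2 * y)).1
  set v := (red ((k : ℤ) ^ 2 * x) ((k : ℤ) ^ 2 * y)).2
  have hgc : k ^ 2 * Int.gcd x y = l ^ 2 * Int.gcd u v := by
    have e1 : Int.gcd ((k : ℤ) ^ 2 * x) ((k : ℤ) ^ 2 * y) = k ^ 2 * Int.gcd x y := by
      rw [Int.gcd_mul_left]; simp [Int.natAbs_pow]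
    have e2 : Int.gcd ((l : ℤ) ^ 2 * u) ((l : ℤ) ^ 2 * v) = l ^ 2 * Int.gcd u v := by
      rw [Int.gcd_mul_left]; simp [Int.natAbs_pow]
    rw [← e1, h1, h2, e2]
  have hgx : Int.gcd x y ≠ 0 := fun h => hx (Int.gcd_eq_zero_iff.1 (by exact_mod_cast h)).1
  obtain ⟨hkl, -⟩ := sq_sf_unique (by positivity) hgc hsf hsf'
  subst hkl
  have hc : ((k : ℤ)) ^ 2 ≠ 0 := by positivity
  have ex : x = u := mul_left_cancel₀ hc h1
  have ey : y = v := mul_left_cancel₀ hc h2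
  rw [Prod.ext_iff]
  exact ⟨ex.symm, ey.symm⟩

lemma gcd_add_mul' (q a t : ℤ) : Int.gcd q (a + q * t) = Int.gcd q a := by
  have h : ∀ y s : ℤ, Int.gcd q y ∣ Int.gcd q (y + q * s) := by
    intro y s
    rw [← Int.natCast_dvd_natCast]
    exact_mod_cast Int.dvd_gcd (Int.gcd_dvd_left q y)
      (dvd_add (Int.gcd_dvd_right q y) ((Int.gcd_dvd_left q y).mul_right s))
  refine Nat.dvd_antisymm ?_ (h a t)
  have h2 := h (a + q * t) (-t)
  have e : a + q * t + q * (-t) = a := by ring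
  rwa [e] at h2

lemma gcd_neg_left (q a : ℤ) : Int.gcd (-q) a = Int.gcd q a := by
  simp [Int.gcd]

/-- Invariance of `z` under affine maps `m ↦ ε m + t` with `ε = ±1`. -/
lemma z_affine (I J : Finset ℕ) (ε t : ℤ) (hε : ε = 1 ∨ ε = -1)
    (H1 : ∀ j ∈ J, ∃ m ∈ I, (j : ℤ) = ε * m + t)
    (H2 : ∀ m ∈ I, ∃ j ∈ J, (j : ℤ) = ε * m + t) : z J = z I := by
  set F : ℤ × ℤ → ℤ × ℤ := fun p => (ε * p.1, p.2 - ε * p.1 * t) with hF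
  set G : ℤ × ℤ → ℤ × ℤ := fun p => (ε * p.1, p.2 + p.1 * t) with hG
  have hGF : ∀ p : ℤ × ℤ, G (F p) = p := by
    intro p
    simp only [hF, hG]
    refine Prod.ext ?_ ?_ <;> simp <;> rcases hε with rfl | rfl <;> ring
  have hFG : ∀ p : ℤ × ℤ, F (G p) = p := by
    intro p
    simp only [hF, hG]
    refine Prod.ext ?_ ?_ <;> simp <;> rcases hε with rfl | rfl <;> ring
  have hεgcd : ∀ q a : ℤ, Int.gcd (ε * q) a = Int.gcd q a := by
    intro q a
    rcases hε with rfl | rfl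
    · rw [one_mul]
    · rw [neg_one_mul, gcd_neg_left]
  have hmapsF : Set.MapsTo F (Zset I) (Zset J) := by
    rintro ⟨q, a⟩ ⟨hsf, hq, hsq⟩
    refine ⟨?_, ?_, ?_⟩
    · show Squarefree (Int.gcd (ε * q) (a - ε * q * t))
      rw [hεgcd]
      have : a - ε * q * t = a + q * (-(ε * t)) := by ring
      rw [this, gcd_add_mul']
      exact hsf
    · show ε * q ≠ 0
      rcases hε with rfl | rfl <;> simpa
    · intro j hj
      obtain ⟨m, hm, hjm⟩ := H1 j hj
      show IsSquare (ε * q * (j : ℤ) + (a - ε * q * t))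
      have : ε * q * (j : ℤ) + (a - ε * q * t) = q * m + a := by
        rw [hjm]; rcases hε with rfl | rfl <;> ring
      rw [this]
      exact hsq m hm
  have hmapsG : Set.MapsTo G (Zset J) (Zset I) := by
    rintro ⟨q, a⟩ ⟨hsf, hq, hsq⟩
    refine ⟨?_, ?_, ?_⟩
    · show Squarefree (Int.gcd (ε * q) (a + q * t))
      rw [hεgcd, gcd_add_mul']
      exact hsf
    · show ε * q ≠ 0
      rcases hε with rfl | rfl <;> simpa
    · intro m hm
      obtain ⟨j, hj, hjm⟩ := H2 m hm
      show IsSquare (ε * q * (m : ℤ) + (a + q * t))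
      have : ε * q * (m : ℤ) + (a + q * t) = q * j + a := by
        rw [hjm]; rcases hε with rfl | rfl <;> ring
      rw [this]
      exact hsq j hj
  have hbij : Set.BijOn F (Zset I) (Zset J) :=
    Set.InvOn.bijOn ⟨fun p _ => hGF p, fun p _ => hFG p⟩ hmapsF hmapsG
  rw [z, z, ← hbij.image_eq, Set.ncard_image_of_injOn hbij.injOn]

lemma isSquare_of_sq_mul {k z w : ℤ} (hk : k ≠ 0) (h : k ^ 2 * z = w ^ 2) : IsSquare z := by
  have hkw : k ∣ w := (Int.pow_dvd_pow_iff two_ne_zero).1 ⟨z, h.symm⟩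
  obtain ⟨v, rfl⟩ := hkw
  have hz : z = v * v := by
    have h2 : k ^ 2 * z = k ^ 2 * (v * v) := by linear_combination h
    exact mul_left_cancel₀ (pow_ne_zero 2 hk) h2
  exact ⟨v, hz⟩

lemma scale_aux {I J : Finset ℕ} {c d : ℕ} (hc : 0 < c) (hd : 0 < d)
    (H1 : ∀ j ∈ J, ∃ m ∈ I, d * j = c * m) {q a : ℤ} (h : (q, a) ∈ Zset I) :
    red (q * d * c) (a * c ^ 2) ∈ Zset J ∧
    red ((red (q * d * c) (a * c ^ 2)).1 * c * d)
      ((red (q * d * c) (a * c ^ 2)).2 * d ^ 2) = (q, a) := by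
  obtain ⟨hsf, hq, hsq⟩ := h
  have hq' : q ≠ 0 := hq
  have hc' : (c : ℤ) ≠ 0 := by exact_mod_cast hc.ne'
  have hd' : (d : ℤ) ≠ 0 := by exact_mod_cast hd.ne'
  have hX : q * d * c ≠ 0 := by
    apply mul_ne_zero (mul_ne_zero hq' hd') hc'
  obtain ⟨k, hk, h1, h2, hsf'⟩ := red_spec (Y := a * c ^ 2) hX
  set u := (red (q * d * c) (a * c ^ 2)).1 with hu_def
  set b := (red (q * d * c) (a * c ^ 2)).2 with hb_def
  have hk' : (k : ℤ) ≠ 0 := by exact_mod_cast hk.ne'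
  have hu : u ≠ 0 := by
    intro h0
    rw [h0, mul_zero] at h1
    exact hX h1
  have hkdvd : k ∣ c * d := by
    apply key_dvd (Q := q.natAbs) (A := a.natAbs) (s := c ^ 2)
      (Int.natAbs_ne_zero.2 hq') (Nat.mul_ne_zero hc.ne' hd.ne') (pow_ne_zero 2 hc.ne')
      ⟨d ^ 2, by ring⟩
    · intro p pp ⟨hpQ, hpA⟩
      have hpg : p * p ∣ Int.gcd q a := by
        rw [← sq]
        exact Nat.dvd_gcd hpQ hpA
      exact pp.not_isUnit (hsf p hpg)
    · have hdd : ((k ^ 2 : ℕ) : ℤ) ∣ q * d * c := by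
        push_cast
        exact ⟨u, h1⟩
      rw [Int.natCast_dvd] at hdd
      have : (q * d * c).natAbs = q.natAbs * (c * d) := by
        rw [Int.natAbs_mul, Int.natAbs_mul]
        simp only [Int.natAbs_natCast]
        ring
      rwa [this] at hdd
    · have hdd : ((k ^ 2 : ℕ) : ℤ) ∣ a * c ^ 2 := by
        push_cast
        exact ⟨b, h2⟩
      rw [Int.natCast_dvd] at hdd
      have : (a * c ^ 2).natAbs = a.natAbs * c ^ 2 := by
        rw [Int.natAbs_mul, Int.natAbs_pow]
        simp only [Int.natAbs_natCast]
      rwa [this] at hdd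
  obtain ⟨w, hw⟩ := hkdvd
  have hw0 : 0 < w := by
    rcases Nat.eq_zero_or_pos w with rfl | h
    · rw [Nat.mul_zero] at hw
      exact absurd hw (Nat.mul_ne_zero hc.ne' hd.ne')
    · exact h
  have hwz : (c : ℤ) * d = k * w := by exact_mod_cast congrArg (Nat.cast : ℕ → ℤ) hw
  constructor
  · refine ⟨hsf', hu, ?_⟩
    intro j hj
    obtain ⟨m, hm, hdj⟩ := H1 j hj
    obtain ⟨s, hs⟩ := hsq m hm
    have hdj' : (d : ℤ) * j = c * m := by exact_mod_cast hdj
    apply isSquare_of_sq_mul hk' (w := c * s)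
    calc (k : ℤ) ^ 2 * (u * j + b) = (q * d * c) * j + (a * c ^ 2) := by
          rw [h1, h2]; ring
      _ = q * c * ((d : ℤ) * j) + a * c ^ 2 := by ring
      _ = q * c * ((c : ℤ) * m) + a * c ^ 2 := by rw [hdj']
      _ = (c : ℤ) ^ 2 * (q * m + a) := by ring
      _ = ((c : ℤ) * s) ^ 2 := by rw [hs]; ring
  · have e1 : u * c * d = q * w ^ 2 := by
      apply mul_left_cancel₀ (pow_ne_zero 2 hk')
      calc (k : ℤ) ^ 2 * (u * c * d) = ((k : ℤ) ^ 2 * u) * (c * d) := by ring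
        _ = (q * d * c) * (c * d) := by rw [← h1]
        _ = q * ((c : ℤ) * d) * ((c : ℤ) * d) := by ring
        _ = q * ((k : ℤ) * w) * ((k : ℤ) * w) := by rw [hwz]
        _ = (k : ℤ) ^ 2 * (q * w ^ 2) := by ring
    have e2 : b * d ^ 2 = a * w ^ 2 := by
      apply mul_left_cancel₀ (pow_ne_zero 2 hk')
      calc (k : ℤ) ^ 2 * (b * d ^ 2) = ((k : ℤ) ^ 2 * b) * d ^ 2 := by ring
        _ = (a * c ^ 2) * d ^ 2 := by rw [← h2]
        _ = a * ((c : ℤ) * d) * ((c : ℤ) * d) := by ring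
        _ = a * ((k : ℤ) * w) * ((k : ℤ) * w) := by rw [hwz]
        _ = (k : ℤ) ^ 2 * (a * w ^ 2) := by ring
    rw [show u * (c : ℤ) * d = (w : ℤ) ^ 2 * q by rw [e1]; ring,
      show b * (d : ℤ) ^ 2 = (w : ℤ) ^ 2 * a by rw [e2]; ring]
    exact red_eq hq' hsf hw0

/-- Invariance of `z` under scaling by a positive rational `c / d`. -/
lemma z_scale (I J : Finset ℕ) (c d : ℕ) (hc : 0 < c) (hd : 0 < d)
    (H1 : ∀ j ∈ J, ∃ m ∈ I, d * j = c * m)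
    (H2 : ∀ m ∈ I, ∃ j ∈ J, d * j = c * m) : z J = z I := by
  set F : ℤ × ℤ → ℤ × ℤ := fun p => red (p.1 * d * c) (p.2 * c ^ 2) with hF
  set G : ℤ × ℤ → ℤ × ℤ := fun p => red (p.1 * c * d) (p.2 * d ^ 2) with hG
  have H2' : ∀ m ∈ I, ∃ j ∈ J, c * m = d * j := by
    intro m hm; obtain ⟨j, hj, hjm⟩ := H2 m hm; exact ⟨j, hj, hjm.symm⟩
  have hfwd : ∀ p ∈ Zset I, F p ∈ Zset J ∧ G (F p) = p := by
    rintro ⟨q, a⟩ hp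
    exact scale_aux hc hd H1 hp
  have hbwd : ∀ p ∈ Zset J, G p ∈ Zset I ∧ F (G p) = p := by
    rintro ⟨q, a⟩ hp
    exact scale_aux hd hc H2' hp
  have hbij : Set.BijOn F (Zset I) (Zset J) :=
    Set.InvOn.bijOn ⟨fun p hp => (hfwd p hp).2, fun p hp => (hbwd p hp).2⟩
      (fun p hp => (hfwd p hp).1) (fun p hp => (hbwd p hp).1)
  rw [z, z, ← hbij.image_eq, Set.ncard_image_of_injOn hbij.injOn]

/-- The quantity `z I` is invariant under translation, scaling by positive rationals,
and reflection of the set `I`. -/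
theorem z_invariant_under_equivalence (I : Finset ℕ) (hcard : 2 ≤ I.card)
    (hne : I.Nonempty) :
    (∀ i : ℤ, (∀ m ∈ I, 0 ≤ (m : ℤ) + i) →
      ∀ J : Finset ℕ, (∀ j : ℕ, j ∈ J ↔ ∃ m ∈ I, (j : ℤ) = (m : ℤ) + i) → z J = z I) ∧
    (∀ r : ℚ, 0 < r → (∀ m ∈ I, ∃ n : ℕ, (n : ℚ) = r * (m : ℚ)) →
      ∀ J : Finset ℕ, (∀ j : ℕ, j ∈ J ↔ ∃ m ∈ I, (j : ℚ) = r * (m : ℚ)) → z J = z I) ∧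
    z (I.image fun j => I.min' hne + I.max' hne - j) = z I := by
  refine ⟨?_, ?_, ?_⟩
  · -- translation
    intro i hi J hJ
    apply z_affine I J 1 i (Or.inl rfl)
    · intro j hj
      obtain ⟨m, hm, hjm⟩ := (hJ j).1 hj
      exact ⟨m, hm, by rw [hjm]; ring⟩
    · intro m hm
      have h0 : 0 ≤ (m : ℤ) + i := hi m hm
      refine ⟨((m : ℤ) + i).toNat, (hJ _).2 ⟨m, hm, by rw [Int.toNat_of_nonneg h0]⟩, ?_⟩
      rw [Int.toNat_of_nonneg h0]; ring
  · -- scaling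
    intro r hr hrI J hJ
    have hnum : 0 < r.num := Rat.num_pos.2 hr
    set c : ℕ := r.num.toNat with hc_def
    have hcz : (c : ℤ) = r.num := Int.toNat_of_nonneg hnum.le
    have hc : 0 < c := by
      have : (0 : ℤ) < (c : ℤ) := by rw [hcz]; exact hnum
      exact_mod_cast this
    have hden : (0 : ℕ) < r.den := r.pos
    have hrd : r * (r.den : ℚ) = (r.num : ℚ) := Rat.mul_den_eq_num r
    have conv : ∀ j m : ℕ, (j : ℚ) = r * m → r.den * j = c * m := by
      intro j m hjm
      have h1 : ((r.den * j : ℕ) : ℚ) = ((r.num * m : ℤ) : ℚ) := by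
        push_cast
        rw [hjm]
        calc (r.den : ℚ) * (r * m) = (r * r.den) * m := by ring
          _ = (r.num : ℚ) * m := by rw [hrd]
      have h2 : ((r.den * j : ℕ) : ℤ) = r.num * m := by exact_mod_cast h1
      have h3 : ((r.den * j : ℕ) : ℤ) = ((c * m : ℕ) : ℤ) := by
        rw [h2]
        push_cast
        rw [hcz]
      exact_mod_cast h3
    apply z_scale I J c r.den hc hden
    · intro j hj
      obtain ⟨m, hm, hjm⟩ := (hJ j).1 hj
      exact ⟨m, hm, conv j m hjm⟩
    · intro m hm
      obtain ⟨n, hn⟩ := hrI m hm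
      exact ⟨n, (hJ n).2 ⟨m, hm, hn⟩, conv n m hn⟩
  · -- reflection
    apply z_affine I _ (-1) ((I.min' hne : ℤ) + I.max' hne) (Or.inr rfl)
    · intro j hj
      obtain ⟨m, hm, hjm⟩ := Finset.mem_image.1 hj
      refine ⟨m, hm, ?_⟩
      have hmle : m ≤ I.min' hne + I.max' hne :=
        le_trans (I.le_max' m hm) (Nat.le_add_left _ _)
      rw [← hjm]
      push_cast [Nat.cast_sub hmle]
      ring
    · intro m hm
      refine ⟨I.min' hne + I.max' hne - m, Finset.mem_image.2 ⟨m, hm, rfl⟩, ?_⟩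
      have hmle : m ≤ I.min' hne + I.max' hne :=
        le_trans (I.le_max' m hm) (Nat.le_add_left _ _)
      push_cast [Nat.cast_sub hmle]
      ring
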